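/- arXiv:2204.02374 — 2 statements merged into one kernel-verified Lean document; each statement's English description precedes it below -/
import Mathlib

section
/- Let k be a natural number, let r be a decidable relation on Fin k representing the directed edges of a finite directed graph, and let M be the k × k matrix over the natural numbers with M i j = 1 if r i j holds and M i j = 0 otherwise. Then the graph is acyclic (there is no vertex i with (i, i) in the transitive closure of r, i.e. no directed cycle) if and only if for every natural number n ≥ 1 and every vertex i, the diagonal entry (M ^ n) i i equals 0. -/
lemma pow_entry_ne_zero_transGen {k : ℕ} (r : Fin k → Fin k → Prop) [DecidableRel r]
    (M : Matrix (Fin k) (Fin k) ℕ)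
    (hM : ∀ i j, M i j = if r i j then 1 else 0) :
    ∀ n i j, (M ^ (n + 1)) i j ≠ 0 → Relation.TransGen r i j := by
  intro n
  induction n with
  | zero =>
    intro i j h
    rw [pow_one, hM] at h
    split at h
    · exact Relation.TransGen.single ‹_›
    · exact absurd rfl h
  | succ n ih =>
    intro i j h
    rw [pow_succ, Matrix.mul_apply] at h
    obtain ⟨l, hl⟩ := Finset.exists_ne_zero_of_sum_ne_zero h
    have h1 : (M ^ (n + 1)) i l ≠ 0 := fun h0 => hl.2 (by simp [h0])
    have h2 : M l j ≠ 0 := fun h0 => hl.2 (by simp [h0])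
    rw [hM] at h2
    split at h2
    · exact (ih i l h1).tail ‹_›
    · exact absurd rfl h2

lemma transGen_pow_entry_ne_zero {k : ℕ} (r : Fin k → Fin k → Prop) [DecidableRel r]
    (M : Matrix (Fin k) (Fin k) ℕ)
    (hM : ∀ i j, M i j = if r i j then 1 else 0) :
    ∀ i j, Relation.TransGen r i j → ∃ n, (M ^ (n + 1)) i j ≠ 0 := by
  intro i j h
  induction h with
  | single hr =>
    exact ⟨0, by rw [pow_one, hM]; simp [hr]⟩
  | tail _ hr ih =>
    obtain ⟨n, hn⟩ := ih
    refine ⟨n + 1, ?_⟩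
    rw [pow_succ, Matrix.mul_apply]
    rename_i b c _
    intro h0
    rw [Finset.sum_eq_zero_iff] at h0
    have := h0 b (Finset.mem_univ b)
    rw [hM] at this
    simp [hr] at this
    exact hn this

/-- A directed graph on `Fin k` given by a relation `r` is acyclic (no vertex is related to
itself under the transitive closure of `r`) if and only if every positive power of its
adjacency matrix has zeros on the diagonal. -/
theorem acyclic_iff_matrix_pow_diag_zero (k : ℕ) (r : Fin k → Fin k → Prop)
    [DecidableRel r] (M : Matrix (Fin k) (Fin k) ℕ)
    (hM : ∀ i j, M i j = if r i j then 1 else 0) :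
    (¬ ∃ i : Fin k, Relation.TransGen r i i) ↔
      ∀ n : ℕ, 1 ≤ n → ∀ i : Fin k, (M ^ n) i i = 0 := by
  constructor
  · intro hac n hn i
    by_contra h
    obtain ⟨m, rfl⟩ := Nat.exists_eq_add_of_le hn
    rw [add_comm] at h
    exact hac ⟨i, pow_entry_ne_zero_transGen r M hM m i i h⟩
  · rintro h ⟨i, hi⟩
    obtain ⟨n, hn⟩ := transGen_pow_entry_ne_zero r M hM i i hi
    exact hn (h (n + 1) (by omega) i)
end

section
/- Let (Ω, F, μ) be a standard Borel probability space, let Z : Ω → (Fin p → ℝ) be a measurable random vector, and let ε_1, …, ε_p : Ω → ℝ be real random variables such that the family consisting of the σ-algebra generated by Z together with the σ-algebras generated by each ε_i is mutually independent. Let e_1, …, e_p be real constants and define W_i(ω) = e_i · Z(ω) i + ε_i(ω) for each i. Then the family of random variables (W_1, …, W_p) is mutually conditionally independent given the σ-algebra generated by Z. -/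
open MeasureTheory ProbabilityTheory

/-- If the σ-algebra generated by `Z` and the σ-algebras generated by the shocks `ε i` form a
mutually independent family, then the AR(1) updates `W i = e i * Z i + ε i` are mutually
conditionally independent given the σ-algebra generated by `Z`. -/
theorem iCondIndepFun_exogenous_states
    {Ω : Type*} [MeasurableSpace Ω] [StandardBorelSpace Ω]
    (μ : Measure Ω) [IsProbabilityMeasure μ]
    {p : ℕ}
    (Z : Ω → (Fin p → ℝ)) (hZ : Measurable Z)
    (ε : Fin p → Ω → ℝ) (hε : ∀ i, Measurable (ε i))
    (hindep : iIndep
      (fun o : Option (Fin p) =>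
        o.elim (MeasurableSpace.comap Z inferInstance)
          (fun i => MeasurableSpace.comap (ε i) inferInstance)) μ)
    (e : Fin p → ℝ)
    (W : Fin p → Ω → ℝ) (hW : ∀ i ω, W i ω = e i * Z ω i + ε i ω) :
    iCondIndepFun (MeasurableSpace.comap Z inferInstance)
      (measurable_iff_comap_le.mp hZ) W μ := by
  classical
  set M : Option (Fin p) → MeasurableSpace Ω := fun o =>
    o.elim (MeasurableSpace.comap Z inferInstance)
      (fun i => MeasurableSpace.comap (ε i) inferInstance) with hMdef
  have hm' : MeasurableSpace.comap Z inferInstance ≤ ‹MeasurableSpace Ω› :=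
    measurable_iff_comap_le.mp hZ
  have hMle : ∀ o, M o ≤ ‹MeasurableSpace Ω› := by
    rintro (_ | i)
    · exact hm'
    · exact measurable_iff_comap_le.mp (hε i)
  -- measure of an intersection of shock events is the product
  have prodT : ∀ (S : Finset (Fin p)) (v : Fin p → Set ℝ), (∀ i ∈ S, MeasurableSet (v i)) →
      μ (⋂ i ∈ S, ε i ⁻¹' v i) = ∏ i ∈ S, μ (ε i ⁻¹' v i) := by
    intro S v hv
    have h := hindep.meas_biInter (S := S.image some)
      (s := fun o => o.elim Set.univ (fun i => ε i ⁻¹' v i)) ?_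
    · rw [Finset.set_biInter_finset_image,
        Finset.prod_image (fun a _ b _ h => Option.some_injective _ h)] at h
      exact h
    · rintro (_ | i) ho
      · simp at ho
      · exact ⟨v i, hv i (by simpa using ho), rfl⟩
  -- key conditional expectation computation
  have key : ∀ (A : Set Ω), MeasurableSet[MeasurableSpace.comap Z inferInstance] A →
      ∀ (S : Finset (Fin p)) (v : Fin p → Set ℝ), (∀ i ∈ S, MeasurableSet (v i)) →
      (μ⟦A ∩ ⋂ i ∈ S, ε i ⁻¹' v i | MeasurableSpace.comap Z inferInstance⟧)
        =ᵐ[μ] A.indicator (fun _ => (μ (⋂ i ∈ S, ε i ⁻¹' v i)).toReal) := by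
    intro A hA S v hv
    have hTm : MeasurableSet (⋂ i ∈ S, ε i ⁻¹' v i) :=
      Finset.measurableSet_biInter _ fun i hi => (hε i) (hv i hi)
    have hTsup : MeasurableSet[⨆ o ∈ (some '' (↑S : Set (Fin p))), M o]
        (⋂ i ∈ S, ε i ⁻¹' v i) := by
      refine Finset.measurableSet_biInter _ fun i hi => ?_
      have h1 : MeasurableSet[M (some i)] (ε i ⁻¹' v i) := ⟨v i, hv i hi, rfl⟩
      exact (le_iSup₂ (f := fun o (_ : o ∈ some '' (↑S : Set (Fin p))) => M o)
        (some i) ⟨i, hi, rfl⟩) _ h1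
    have hIndep : Indep (⨆ o ∈ (some '' (↑S : Set (Fin p))), M o)
        (MeasurableSpace.comap Z inferInstance) μ := by
      have h := indep_iSup_of_disjoint hMle hindep
        (S := some '' (↑S : Set (Fin p))) (T := {none}) (by simp)
      simp at h ⊢
      exact h
    have hsuple : (⨆ o ∈ (some '' (↑S : Set (Fin p))), M o) ≤ ‹MeasurableSpace Ω› :=
      iSup₂_le fun o _ => hMle o
    haveI : SigmaFinite (μ.trim hm') := inferInstance
    have hcond : (μ[(⋂ i ∈ S, ε i ⁻¹' v i).indicator (fun _ => (1 : ℝ)) |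
        MeasurableSpace.comap Z inferInstance])
        =ᵐ[μ] fun _ => (μ (⋂ i ∈ S, ε i ⁻¹' v i)).toReal := by
      have h := condExp_indep_eq (μ := μ)
        (f := (⋂ i ∈ S, ε i ⁻¹' v i).indicator (fun _ => (1 : ℝ))) hsuple hm'
        ((stronglyMeasurable_const (b := (1 : ℝ))).indicator hTsup) hIndep
      refine h.trans ?_
      filter_upwards with ω
      rw [integral_indicator_const (1 : ℝ) hTm, smul_eq_mul, mul_one, measureReal_def]
    have hint : Integrable ((⋂ i ∈ S, ε i ⁻¹' v i).indicator (fun _ => (1 : ℝ))) μ :=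
      (integrable_const 1).indicator hTm
    calc (μ⟦A ∩ ⋂ i ∈ S, ε i ⁻¹' v i | MeasurableSpace.comap Z inferInstance⟧)
        = μ[A.indicator ((⋂ i ∈ S, ε i ⁻¹' v i).indicator (fun _ => (1 : ℝ))) |
            MeasurableSpace.comap Z inferInstance] := by rw [Set.indicator_indicator]
      _ =ᵐ[μ] A.indicator (μ[(⋂ i ∈ S, ε i ⁻¹' v i).indicator (fun _ => (1 : ℝ)) |
            MeasurableSpace.comap Z inferInstance]) := condExp_indicator hint hA
      _ =ᵐ[μ] A.indicator (fun _ => (μ (⋂ i ∈ S, ε i ⁻¹' v i)).toReal) := by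
          filter_upwards [hcond] with ω hω
          by_cases h : ω ∈ A <;> simp [Set.indicator_apply, h, hω]
  -- the π-systems
  set π : Fin p → Set (Set Ω) := fun i =>
    {s | ∃ u v, MeasurableSet u ∧ MeasurableSet v ∧ s = Z ⁻¹' u ∩ ε i ⁻¹' v} with hπdef
  have hpi : ∀ i, IsPiSystem (π i) := by
    rintro i s ⟨u1, v1, hu1, hv1, rfl⟩ t ⟨u2, v2, hu2, hv2, rfl⟩ -
    refine ⟨u1 ∩ u2, v1 ∩ v2, hu1.inter hu2, hv1.inter hv2, ?_⟩
    ext ω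
    simp only [Set.mem_inter_iff, Set.mem_preimage]
    tauto
  have hπmeas : ∀ i, ∀ s ∈ π i, MeasurableSet s := by
    rintro i s ⟨u, v, hu, hv, rfl⟩
    exact (hZ hu).inter ((hε i) hv)
  have hgen : ∀ i : Fin p,
      (MeasurableSpace.comap Z inferInstance ⊔ MeasurableSpace.comap (ε i) inferInstance)
        = MeasurableSpace.generateFrom (π i) := by
    intro i
    refine le_antisymm (sup_le ?_ ?_) (MeasurableSpace.generateFrom_le ?_)
    · rintro s ⟨u, hu, rfl⟩
      exact MeasurableSpace.measurableSet_generateFrom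
        ⟨u, Set.univ, hu, MeasurableSet.univ, by simp⟩
    · rintro s ⟨v, hv, rfl⟩
      exact MeasurableSpace.measurableSet_generateFrom
        ⟨Set.univ, v, MeasurableSet.univ, hv, by simp⟩
    · rintro s ⟨u, v, hu, hv, rfl⟩
      exact MeasurableSet.inter
        ((le_sup_left : MeasurableSpace.comap Z inferInstance ≤ _) _ ⟨u, hu, rfl⟩)
        ((le_sup_right : MeasurableSpace.comap (ε i) inferInstance ≤ _) _ ⟨v, hv, rfl⟩)
  -- conditional independence of the π-systems
  have hπ_ind : iCondIndepSets (MeasurableSpace.comap Z inferInstance)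
      (measurable_iff_comap_le.mp hZ) π μ := by
    rw [iCondIndepSets_iff _ _ _ hπmeas]
    intro S f hf
    choose! u v hu hv heq using hf
    have hA : MeasurableSet[MeasurableSpace.comap Z inferInstance] (⋂ i ∈ S, Z ⁻¹' u i) :=
      Finset.measurableSet_biInter _ fun i hi => ⟨u i, hu i hi, rfl⟩
    have hset : ⋂ i ∈ S, f i = (⋂ i ∈ S, Z ⁻¹' u i) ∩ ⋂ i ∈ S, ε i ⁻¹' v i := by
      ext ω
      simp only [Set.mem_iInter, Set.mem_inter_iff]
      constructor
      · intro h
        constructor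
        · intro i hi
          have h2 := h i hi
          rw [heq i hi] at h2
          exact h2.1
        · intro i hi
          have h2 := h i hi
          rw [heq i hi] at h2
          exact h2.2
      · intro h i hi
        rw [heq i hi]
        exact ⟨h.1 i hi, h.2 i hi⟩
    have hae : ∀ᵐ ω ∂μ, ∀ i ∈ S,
        (μ⟦f i | MeasurableSpace.comap Z inferInstance⟧) ω
          = (Z ⁻¹' u i).indicator (fun _ => (μ (ε i ⁻¹' v i)).toReal) ω := by
      rw [Filter.eventually_all_finset]
      intro i hi
      have h2 := key (Z ⁻¹' u i) ⟨u i, hu i hi, rfl⟩ {i} v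
        (fun j hj => by rw [Finset.mem_singleton.mp hj]; exact hv i hi)
      rw [Finset.set_biInter_singleton] at h2
      rw [← heq i hi] at h2
      exact h2
    have hprod : ∀ ω,
        (∏ i ∈ S, ((Z ⁻¹' u i).indicator (fun _ => (μ (ε i ⁻¹' v i)).toReal) ω))
          = (⋂ i ∈ S, Z ⁻¹' u i).indicator
              (fun _ => (∏ i ∈ S, μ (ε i ⁻¹' v i)).toReal) ω := by
      intro ω
      by_cases h : ω ∈ ⋂ i ∈ S, Z ⁻¹' u i
      · rw [Set.indicator_of_mem h, ENNReal.toReal_prod]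
        exact Finset.prod_congr rfl fun i hi =>
          Set.indicator_of_mem (Set.mem_iInter₂.mp h i hi) _
      · rw [Set.indicator_of_notMem h]
        simp only [Set.mem_iInter] at h
        push_neg at h
        obtain ⟨i, hi, hωi⟩ := h
        exact Finset.prod_eq_zero hi (Set.indicator_of_notMem hωi _)
    calc (μ⟦⋂ i ∈ S, f i | MeasurableSpace.comap Z inferInstance⟧)
        = μ⟦(⋂ i ∈ S, Z ⁻¹' u i) ∩ ⋂ i ∈ S, ε i ⁻¹' v i |
            MeasurableSpace.comap Z inferInstance⟧ := by rw [hset]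
      _ =ᵐ[μ] (⋂ i ∈ S, Z ⁻¹' u i).indicator
            (fun _ => (μ (⋂ i ∈ S, ε i ⁻¹' v i)).toReal) := key _ hA S v hv
      _ = (⋂ i ∈ S, Z ⁻¹' u i).indicator
            (fun _ => (∏ i ∈ S, μ (ε i ⁻¹' v i)).toReal) := by rw [prodT S v hv]
      _ =ᵐ[μ] ∏ i ∈ S, (μ⟦f i | MeasurableSpace.comap Z inferInstance⟧) := by
          filter_upwards [hae] with ω hω
          rw [Finset.prod_apply, ← hprod ω]
          exact (Finset.prod_congr rfl fun i hi => hω i hi).symm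
  -- from π-systems to σ-algebras
  have hsup_le : ∀ i : Fin p,
      (MeasurableSpace.comap Z inferInstance ⊔ MeasurableSpace.comap (ε i) inferInstance)
        ≤ ‹MeasurableSpace Ω› :=
    fun i => sup_le hm' (measurable_iff_comap_le.mp (hε i))
  have hcondsup : iCondIndep (MeasurableSpace.comap Z inferInstance)
      (measurable_iff_comap_le.mp hZ)
      (fun i : Fin p =>
        MeasurableSpace.comap Z inferInstance ⊔ MeasurableSpace.comap (ε i) inferInstance) μ :=
    iCondIndepSets.iCondIndep _ hsup_le _ hpi hgen hπ_ind
  -- monotonicity: σ(W i) ≤ σ(Z) ⊔ σ(ε i)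
  have hWle : ∀ i : Fin p, MeasurableSpace.comap (W i) inferInstance
      ≤ MeasurableSpace.comap Z inferInstance ⊔ MeasurableSpace.comap (ε i) inferInstance := by
    intro i
    refine measurable_iff_comap_le.mp ?_
    have hZm : Measurable[MeasurableSpace.comap Z inferInstance
        ⊔ MeasurableSpace.comap (ε i) inferInstance] Z :=
      measurable_iff_comap_le.mpr le_sup_left
    have hεm : Measurable[MeasurableSpace.comap Z inferInstance
        ⊔ MeasurableSpace.comap (ε i) inferInstance] (ε i) :=
      measurable_iff_comap_le.mpr le_sup_right
    have hWi : W i = fun ω => e i * Z ω i + ε i ω := funext (hW i)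
    rw [hWi]
    exact (measurable_const.mul ((measurable_pi_apply i).comp hZm)).add hεm
  rw [iCondIndepFun_iff_iCondIndep]
  rw [iCondIndep_iff _ _ _ (fun i => (hWle i).trans (hsup_le i))]
  rw [iCondIndep_iff _ _ _ hsup_le] at hcondsup
  intro s g H
  exact hcondsup s fun i hi => (hWle i) _ (H i hi)
end
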